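/- The Herbst argument: Let X be a random variable with law P and let f be a measurable real-valued function with E_P[exp(λf(X))] < ∞ for all λ ≥ 0. If the tilted distributions satisfy D(P^{(λf)} ‖ P) ≤ (1/2)·λ²σ² for all λ ≥ 0, then log E[exp(λ(f(X) − E[f(X)]))] ≤ λ²σ²/2 for all λ ≥ 0, and consequently P[f(X) ≥ E[f(X)] + t] ≤ exp(−t²/(2σ²)) for all t ≥ 0. -/

import Mathlib

open MeasureTheory Real
open scoped ENNReal

/-- The relative entropy (Kullback–Leibler divergence, in nats) `D(Q‖P) = ∫ log (dQ/dP) dQ`,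
with value `∞` when `Q` is not absolutely continuous with respect to `P` or the integrand is
not integrable. -/
noncomputable def relEnt {Ω : Type*} [MeasurableSpace Ω] (Q P : Measure Ω) : ℝ≥0∞ :=
  open Classical in
  if Q ≪ P ∧ Integrable (fun ω => Real.log (Q.rnDeriv P ω).toReal) Q
  then ENNReal.ofReal (∫ ω, Real.log (Q.rnDeriv P ω).toReal ∂Q)
  else ⊤

/-- **The Herbst argument**: let `X ∼ P` and let `f` be a measurable function with
`E_P[exp (λ f)] < ∞` for all `λ ≥ 0`.  If the tilted distributions `P^{(λ f)}` satisfy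
`D(P^{(λ f)} ‖ P) ≤ (1/2) λ² σ²` for all `λ ≥ 0`, then
`log E[exp (λ (f(X) - E[f(X)]))] ≤ λ² σ² / 2` for all `λ ≥ 0`, and consequently
`P[f(X) ≥ E[f(X)] + t] ≤ exp (-t² / (2 σ²))` for all `t ≥ 0`. -/
theorem herbst_argument
    {Ω : Type*} [MeasurableSpace Ω] (P : Measure Ω) [IsProbabilityMeasure P]
    (f : Ω → ℝ) (hfmeas : Measurable f) (hfint : Integrable f P)
    (hexp : ∀ lam : ℝ, 0 ≤ lam → Integrable (fun ω => Real.exp (lam * f ω)) P)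
    (σ : ℝ) (hσ : 0 < σ)
    (hD : ∀ lam : ℝ, 0 ≤ lam →
      relEnt (P.tilted (fun ω => lam * f ω)) P ≤ ENNReal.ofReal (lam ^ 2 * σ ^ 2 / 2)) :
    (∀ lam : ℝ, 0 ≤ lam →
      Real.log (∫ ω, Real.exp (lam * (f ω - ∫ ω', f ω' ∂P)) ∂P) ≤ lam ^ 2 * σ ^ 2 / 2)
    ∧ (∀ t : ℝ, 0 ≤ t →
      P {ω | (∫ ω', f ω' ∂P) + t ≤ f ω} ≤ ENNReal.ofReal (Real.exp (-t ^ 2 / (2 * σ ^ 2)))) := by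
  classical
  set m : ℝ := ∫ ω', f ω' ∂P with hm
  set Z : ℝ → ℝ := fun s => ∫ ω, Real.exp (s * f ω) ∂P with hZ
  have hZpos : ∀ s : ℝ, 0 ≤ s → 0 < Z s := fun s hs => integral_exp_pos (hexp s hs)
  -- integrability of f * exp (s f)
  have hA : ∀ s : ℝ, 0 ≤ s → Integrable (fun ω => f ω * Real.exp (s * f ω)) P := by
    intro s hs
    have hint : Integrable (fun ω => |f ω| + Real.exp ((s + 1) * f ω)) P :=
      hfint.abs.add (hexp (s + 1) (by linarith))
    refine hint.mono' ((hfmeas.mul ((measurable_const.mul hfmeas).exp)).aestronglyMeasurable) ?_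
    refine Filter.Eventually.of_forall fun ω => ?_
    rw [norm_mul, Real.norm_eq_abs, Real.norm_eq_abs, abs_exp]
    rcases le_or_gt (f ω) 0 with h | h
    · have h1 : Real.exp (s * f ω) ≤ 1 :=
        Real.exp_le_one_iff.mpr (mul_nonpos_of_nonneg_of_nonpos hs h)
      nlinarith [abs_nonneg (f ω), Real.exp_pos ((s + 1) * f ω)]
    · have h1 : f ω ≤ Real.exp (f ω) := (Real.add_one_le_exp (f ω)).trans' (by linarith)
      have h2 : Real.exp ((s + 1) * f ω) = Real.exp (f ω) * Real.exp (s * f ω) := by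
        rw [← Real.exp_add]; ring_nf
      rw [abs_of_pos h]
      nlinarith [Real.exp_pos (s * f ω), abs_nonneg (f ω)]
  -- the key real consequence of the entropy bound
  have hD' : ∀ s : ℝ, 0 ≤ s →
      s * ((∫ ω, f ω * Real.exp (s * f ω) ∂P) / Z s) - Real.log (Z s) ≤ s ^ 2 * σ ^ 2 / 2 := by
    intro s hs
    have hes := hexp s hs
    have hQP : P.tilted (fun ω => s * f ω) ≪ P := tilted_absolutelyContinuous P _
    have hQprob : IsProbabilityMeasure (P.tilted (fun ω => s * f ω)) :=
      isProbabilityMeasure_tilted hes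
    have hlogae : (fun ω => Real.log (((P.tilted (fun ω => s * f ω)).rnDeriv P) ω).toReal)
        =ᵐ[P] fun ω => s * f ω - Real.log (Z s) := log_rnDeriv_tilted_left_self hes
    have hlogaeQ : (fun ω => Real.log (((P.tilted (fun ω => s * f ω)).rnDeriv P) ω).toReal)
        =ᵐ[P.tilted (fun ω => s * f ω)] fun ω => s * f ω - Real.log (Z s) := hQP.ae_le hlogae
    have hfQ : Integrable f (P.tilted (fun ω => s * f ω)) := by
      rw [Measure.tilted,
        integrable_withDensity_iff (((hfmeas.const_mul s).exp.div_const _).ennreal_ofReal)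
          (Filter.Eventually.of_forall fun ω => ENNReal.ofReal_lt_top)]
      refine ((hA s hs).div_const (Z s)).congr ?_
      refine Filter.Eventually.of_forall fun ω => ?_
      beta_reduce
      rw [ENNReal.toReal_ofReal (by positivity)]
      ring
    have hbase : Integrable (fun ω => s * f ω - Real.log (Z s)) (P.tilted (fun ω => s * f ω)) :=
      (hfQ.const_mul s).sub (integrable_const _)
    have hintQ : Integrable
        (fun ω => Real.log (((P.tilted (fun ω => s * f ω)).rnDeriv P) ω).toReal)
        (P.tilted (fun ω => s * f ω)) := hbase.congr hlogaeQ.symm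
    have hDs := hD s hs
    rw [relEnt, if_pos ⟨hQP, hintQ⟩,
      ENNReal.ofReal_le_ofReal_iff (by positivity)] at hDs
    refine le_trans (le_of_eq ?_) hDs
    rw [integral_congr_ae hlogaeQ, integral_sub (hfQ.const_mul s) (integrable_const _),
      integral_const, probReal_univ, one_smul, integral_const_mul]
    have : ∫ ω, f ω ∂(P.tilted (fun ω => s * f ω))
        = (∫ ω, f ω * Real.exp (s * f ω) ∂P) / Z s := by
      rw [integral_tilted]
      simp_rw [smul_eq_mul, div_mul_eq_mul_div, mul_comm]
      rw [integral_div]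
    rw [this]
  -- derivative of Z
  have hZderiv : ∀ s : ℝ, 0 < s → HasDerivAt Z (∫ ω, f ω * Real.exp (s * f ω) ∂P) s := by
    intro s hs
    have key := hasDerivAt_integral_of_dominated_loc_of_deriv_le (μ := P) (x₀ := s)
      (F := fun x ω => Real.exp (x * f ω)) (F' := fun x ω => f ω * Real.exp (x * f ω))
      (bound := fun ω => |f ω| + Real.exp ((2 * s + 1) * f ω)) (Metric.ball_mem_nhds s hs)
      (Filter.Eventually.of_forall fun x =>
        ((measurable_const.mul hfmeas).exp).aestronglyMeasurable)
      (hexp s hs.le)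
      ((hfmeas.mul ((measurable_const.mul hfmeas).exp)).aestronglyMeasurable)
      ?_ (hfint.abs.add (hexp (2 * s + 1) (by linarith))) ?_
    · exact key.2
    · refine Filter.Eventually.of_forall fun ω x hx => ?_
      rw [Real.ball_eq_Ioo] at hx
      obtain ⟨hx1, hx2⟩ := hx
      beta_reduce
      rw [norm_mul, Real.norm_eq_abs, Real.norm_eq_abs, abs_exp]
      rcases le_or_gt (f ω) 0 with h | h
      · have h1 : Real.exp (x * f ω) ≤ 1 :=
          Real.exp_le_one_iff.mpr (mul_nonpos_of_nonneg_of_nonpos (by linarith) h)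
        nlinarith [abs_nonneg (f ω), Real.exp_pos ((2 * s + 1) * f ω)]
      · have h1 : f ω ≤ Real.exp (f ω) := (Real.add_one_le_exp (f ω)).trans' (by linarith)
        have h2 : Real.exp (x * f ω) ≤ Real.exp (2 * s * f ω) := by
          apply Real.exp_le_exp.mpr
          nlinarith
        have h3 : Real.exp ((2 * s + 1) * f ω) = Real.exp (f ω) * Real.exp (2 * s * f ω) := by
          rw [← Real.exp_add]; ring_nf
        rw [abs_of_pos h]
        nlinarith [Real.exp_pos (x * f ω), Real.exp_pos (2 * s * f ω), abs_nonneg (f ω)]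
    · refine Filter.Eventually.of_forall fun ω x _ => ?_
      simpa [mul_comm] using (hasDerivAt_mul_const (f ω)).exp
  -- antitone
  have hanti : AntitoneOn (fun s => Real.log (Z s) / s - s * (σ ^ 2 / 2)) (Set.Ioi 0) := by
    have hderiv : ∀ s ∈ Set.Ioi (0 : ℝ),
        HasDerivAt (fun s => Real.log (Z s) / s - s * (σ ^ 2 / 2))
          (((∫ ω, f ω * Real.exp (s * f ω) ∂P) / Z s * s - Real.log (Z s) * 1) / s ^ 2
            - 1 * (σ ^ 2 / 2)) s := by
      intro s hs
      have h1 : HasDerivAt (fun s => Real.log (Z s))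
          ((∫ ω, f ω * Real.exp (s * f ω) ∂P) / Z s) s :=
        (hZderiv s hs).log (hZpos s hs.le).ne'
      exact (h1.div (hasDerivAt_id s) (ne_of_gt hs)).sub ((hasDerivAt_id s).mul_const (σ ^ 2 / 2))
    apply antitoneOn_of_deriv_nonpos (convex_Ioi 0)
    · exact fun s hs => (hderiv s hs).continuousAt.continuousWithinAt
    · intro s hs
      rw [interior_Ioi] at hs
      exact (hderiv s hs).differentiableAt.differentiableWithinAt
    · intro s hs
      rw [interior_Ioi] at hs
      rw [(hderiv s hs).deriv]
      have h2 := hD' s (le_of_lt hs)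
      rw [sub_nonpos, div_le_iff₀ (pow_pos (Set.mem_Ioi.mp hs) 2)]
      nlinarith [hZpos s hs.le]
  -- limit at 0+
  have hlim : Filter.Tendsto (fun s => Real.log (Z s) / s) (nhdsWithin 0 (Set.Ioi 0))
      (nhds m) := by
    -- Jensen lower bound
    have hjensen : ∀ s : ℝ, 0 < s → m ≤ Real.log (Z s) / s := by
      intro s hs
      have hj := convexOn_exp.map_integral_le (f := fun ω => s * f ω) (μ := P)
        continuous_exp.continuousOn isClosed_univ
        (Filter.Eventually.of_forall fun ω => Set.mem_univ _)
        (hfint.const_mul s) (hexp s hs.le)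
      rw [integral_const_mul] at hj
      rw [le_div_iff₀ hs, mul_comm]
      exact (Real.le_log_iff_exp_le (hZpos s hs.le)).mpr hj
    -- upper bound by (Z s - 1)/s
    have hupper : ∀ s : ℝ, 0 < s →
        Real.log (Z s) / s ≤ ∫ ω, (Real.exp (s * f ω) - 1) / s ∂P := by
      intro s hs
      have h1 : Real.log (Z s) ≤ Z s - 1 := Real.log_le_sub_one_of_pos (hZpos s hs.le)
      have h2 : ∫ ω, (Real.exp (s * f ω) - 1) / s ∂P = (Z s - 1) / s := by
        simp_rw [div_eq_mul_inv]
        rw [integral_mul_const, integral_sub (hexp s hs.le) (integrable_const _),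
          integral_const, probReal_univ, one_smul]
      rw [h2]
      exact div_le_div_of_nonneg_right h1 hs.le |>.trans_eq rfl
    -- dominated convergence for the upper bound
    have hA0 : Filter.Tendsto (fun s => ∫ ω, (Real.exp (s * f ω) - 1) / s ∂P)
        (nhdsWithin 0 (Set.Ioi 0)) (nhds m) := by
      rw [hm]
      refine tendsto_integral_filter_of_dominated_convergence
        (fun ω => |f ω| + Real.exp (2 * f ω)) ?_ ?_ (hfint.abs.add (hexp 2 (by norm_num))) ?_
      · exact Filter.Eventually.of_forall fun s =>
          (((measurable_const.mul hfmeas).exp.sub measurable_const).div_const s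
            ).aestronglyMeasurable
      · refine Filter.eventually_of_mem (Ioc_mem_nhdsGT_of_mem ⟨le_refl 0, zero_lt_one⟩) ?_
        rintro t ⟨ht0, ht1⟩
        refine Filter.Eventually.of_forall fun ω => ?_
        beta_reduce
        set x := f ω with hx
        rw [Real.norm_eq_abs, abs_div, abs_of_pos ht0, div_le_iff₀ ht0]
        rcases le_or_gt x 0 with h | h
        · have h1 : Real.exp (t * x) ≤ 1 :=
            Real.exp_le_one_iff.mpr (mul_nonpos_of_nonneg_of_nonpos ht0.le h)
          have h2 : t * x + 1 ≤ Real.exp (t * x) := Real.add_one_le_exp (t * x)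
          rw [abs_of_nonpos (by linarith), abs_of_nonpos h]
          nlinarith [Real.exp_pos (2 * x)]
        · have h1 : (1 : ℝ) ≤ Real.exp (t * x) :=
            Real.one_le_exp (by positivity)
          have h2 : Real.exp (t * x) - 1 ≤ t * x * Real.exp (t * x) := by
            have h3 := Real.add_one_le_exp (-(t * x))
            rw [Real.exp_neg] at h3
            have h4 := Real.exp_pos (t * x)
            have h5 := mul_le_mul_of_nonneg_right h3 h4.le
            rw [inv_mul_cancel₀ h4.ne'] at h5
            nlinarith
          have h6 : Real.exp (t * x) ≤ Real.exp x := Real.exp_le_exp.mpr (by nlinarith)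
          have h7 : x ≤ Real.exp x := (Real.add_one_le_exp x).trans' (by linarith)
          have h8 : Real.exp (2 * x) = Real.exp x * Real.exp x := by
            rw [← Real.exp_add]; ring_nf
          rw [abs_of_nonneg (by linarith), abs_of_pos h]
          nlinarith [mul_le_mul_of_nonneg_left h6 (mul_nonneg ht0.le h.le),
            mul_le_mul_of_nonneg_right h7 (Real.exp_pos x).le, mul_pos ht0 h,
            Real.exp_pos (t * x), Real.exp_pos x]
      · refine Filter.Eventually.of_forall fun ω => ?_
        have hd : HasDerivAt (fun s : ℝ => Real.exp (s * f ω)) (f ω) 0 := by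
          have hd0 : HasDerivAt (fun x : ℝ => x * f ω) (f ω) 0 := hasDerivAt_mul_const (f ω)
          simpa using hd0.exp
        have ht := hasDerivAt_iff_tendsto_slope.mp hd
        have ht2 := ht.mono_left
          (nhdsWithin_mono (0:ℝ) (fun x (hx : x ∈ Set.Ioi (0:ℝ)) => ne_of_gt hx))
        refine ht2.congr fun s => ?_
        simp [slope, div_eq_inv_mul]
    exact tendsto_of_tendsto_of_tendsto_of_le_of_le' tendsto_const_nhds hA0
      (Filter.eventually_of_mem self_mem_nhdsWithin fun s hs => hjensen s hs)
      (Filter.eventually_of_mem self_mem_nhdsWithin fun s hs => hupper s hs)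
  -- the key bound
  have hkey : ∀ lam : ℝ, 0 ≤ lam → Real.log (Z lam) ≤ lam * m + lam ^ 2 * σ ^ 2 / 2 := by
    intro lam hlam
    rcases eq_or_lt_of_le hlam with h0 | h0
    · rw [← h0]
      have : Z 0 = 1 := by rw [hZ]; simp
      simp [this]
    · have hev : ∀ᶠ ε in nhdsWithin (0:ℝ) (Set.Ioi 0),
          Real.log (Z lam) / lam - lam * (σ ^ 2 / 2) ≤ Real.log (Z ε) / ε := by
        refine Filter.eventually_of_mem (Ioc_mem_nhdsGT_of_mem ⟨le_refl 0, h0⟩) ?_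
        rintro ε ⟨hε0, hεlam⟩
        have h1 := hanti (Set.mem_Ioi.mpr hε0) (Set.mem_Ioi.mpr h0) hεlam
        nlinarith [sq_nonneg σ]
      have hle : Real.log (Z lam) / lam - lam * (σ ^ 2 / 2) ≤ m := ge_of_tendsto hlim hev
      have h2 : Real.log (Z lam) / lam ≤ m + lam * (σ ^ 2 / 2) := by linarith
      have h3 := (div_le_iff₀ h0).mp h2
      nlinarith
  constructor
  · intro lam hlam
    have heq : ∫ ω, Real.exp (lam * (f ω - m)) ∂P = Real.exp (-(lam * m)) * Z lam := by
      rw [hZ]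
      simp only
      rw [← integral_const_mul]
      congr 1
      funext ω
      rw [← Real.exp_add]
      ring_nf
    rw [heq, Real.log_mul (Real.exp_ne_zero _) (hZpos lam hlam).ne', Real.log_exp]
    linarith [hkey lam hlam]
  · intro t ht
    set lam := t / σ ^ 2 with hlamdef
    have hlam0 : 0 ≤ lam := by positivity
    have hcher := ProbabilityTheory.measure_ge_le_exp_mul_mgf (X := f) (μ := P) (t := lam)
      (m + t) hlam0 (hexp lam hlam0)
    have hmgf : ProbabilityTheory.mgf f P lam = Z lam := rfl
    rw [hmgf] at hcher
    have hZle : Z lam ≤ Real.exp (lam * m + lam ^ 2 * σ ^ 2 / 2) := by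
      rw [← Real.exp_log (hZpos lam hlam0)]
      exact Real.exp_le_exp.mpr (hkey lam hlam0)
    have hfinal : (P {ω | m + t ≤ f ω}).toReal ≤ Real.exp (-t ^ 2 / (2 * σ ^ 2)) := by
      refine hcher.trans ?_
      have h4 : Real.exp (-lam * (m + t)) * Z lam
          ≤ Real.exp (-lam * (m + t)) * Real.exp (lam * m + lam ^ 2 * σ ^ 2 / 2) :=
        mul_le_mul_of_nonneg_left hZle (Real.exp_nonneg _)
      refine h4.trans ?_
      rw [← Real.exp_add]
      apply Real.exp_le_exp.mpr
      rw [hlamdef]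
      apply le_of_eq
      field_simp
      ring
    exact (ENNReal.le_ofReal_iff_toReal_le (measure_ne_top P _) (Real.exp_nonneg _)).mpr hfinal
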